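/- arXiv:2511.11029 — 2 statements merged into one kernel-verified Lean document; each statement's English description precedes it below -/
import Mathlib

section
/- Let α be a linearly ordered type with a least element ⊥, let g be a permutation of α, let s be a finite set over α, and let m be a natural number. Then sort(image g s) ++ replicate(m, ⊥) ≤lex map g (sort s ++ replicate(m, ⊥)), where sort t denotes the strictly increasing sorted list of the elements of the finite set t, replicate(m, ⊥) is the list consisting of m copies of ⊥, ++ is list concatenation, image g s is the image of s under g, and map g applies g to every element of a list. -/
/-- A sorted list is lexicographically minimal among its permutations. -/
theorem sorted_lex_of_perm {α : Type*} [LinearOrder α] :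
    ∀ {l₁ l₂ : List α}, l₁.Pairwise (· ≤ ·) → l₁.Perm l₂ →
      l₁ = l₂ ∨ List.Lex (· < ·) l₁ l₂ := by
  intro l₁
  induction l₁ with
  | nil => intro l₂ _ hp; left; exact (hp.nil_eq).symm ▸ rfl
  | cons a t ih =>
    intro l₂ hs hp
    cases l₂ with
    | nil => exact absurd hp.symm (by simp)
    | cons b t₂ =>
      rcases lt_trichotomy a b with h | h | h
      · right; exact List.Lex.rel h
      · subst h
        have ht : t.Perm t₂ := hp.cons_inv
        rcases ih hs.of_cons ht with h | h
        · left; rw [h]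
        · right; exact List.Lex.cons h
      · have hb : b ∈ a :: t := hp.symm.subset (by simp)
        rcases List.mem_cons.mp hb with h' | h'
        · exact absurd h' h.ne
        · exact absurd ((List.pairwise_cons.mp hs).1 b h') (not_le.mpr h)

theorem lex_append_of_length_eq {α : Type*} {r : α → α → Prop} :
    ∀ {l₁ l₂ : List α}, List.Lex r l₁ l₂ → l₁.length = l₂.length →
      ∀ u v : List α, List.Lex r (l₁ ++ u) (l₂ ++ v) := by
  intro l₁ l₂ h
  induction h with
  | nil => intro h; simp at h
  | rel h => intro _ u v; exact List.Lex.rel h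
  | cons _ ih =>
    intro hl u v
    exact List.Lex.cons (ih (by simpa using hl) u v)

/-- ExplicitVariableSizeMarker/Flags representations of sets: padding with the
least value ⊥. -/
theorem explicit_marker_rep_lex {α : Type*} [LinearOrder α] [OrderBot α]
    (g : Equiv.Perm α) (s : Finset α) (m : ℕ) :
    (s.image g).sort (· ≤ ·) ++ List.replicate m (⊥ : α) =
        (s.sort (· ≤ ·) ++ List.replicate m (⊥ : α)).map g ∨
      List.Lex (· < ·) ((s.image g).sort (· ≤ ·) ++ List.replicate m (⊥ : α))
        ((s.sort (· ≤ ·) ++ List.replicate m (⊥ : α)).map g) := by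
  rw [List.map_append, List.map_replicate]
  have hperm : ((s.image g).sort (· ≤ ·)).Perm ((s.sort (· ≤ ·)).map g) := by
    refine (Finset.sort_perm_toList _ _).trans ?_
    refine List.Perm.trans ?_ ((Finset.sort_perm_toList _ _).map g).symm
    rw [← Multiset.coe_eq_coe, ← Multiset.map_coe]
    simp [Finset.image_val, Multiset.dedup_eq_self.mpr (s.nodup.map g.injective)]
  have hsorted : ((s.image g).sort (· ≤ ·)).Pairwise (· ≤ ·) :=
    Finset.pairwise_sort _ _
  rcases sorted_lex_of_perm hsorted hperm with h | h
  · rw [h]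
    rcases eq_or_lt_of_le (bot_le : (⊥ : α) ≤ g ⊥) with hb | hb
    · left; rw [← hb]
    · cases m with
      | zero => left; simp
      | succ n =>
        right
        refine List.Lex.append_left _ ?_ _
        simp only [List.replicate_succ]
        exact List.Lex.rel hb
  · right
    exact lex_append_of_length_eq h hperm.length_eq _ _
end

section
/- Let α be a linearly ordered type, let s be a multiset over α, and let g be a permutation of α. If sort s ≤lex sort(map g s), then sort s ≤lex map g (sort s), where sort t denotes the nondecreasing sorted list of the elements of the multiset t and map g applies g to every element. -/
private theorem sorted_lex_min {α : Type*} [LinearOrder α] :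
    ∀ (l l' : List α), l.Pairwise (· ≤ ·) → l.Perm l' →
      l = l' ∨ List.Lex (· < ·) l l'
  | [], l', _, hp => Or.inl hp.nil_eq
  | a :: t, l', hs, hp => by
    obtain ⟨b, t', rfl⟩ : ∃ b t', l' = b :: t' := by
      cases l' with
      | nil => exact absurd hp.symm.nil_eq (by simp)
      | cons b t' => exact ⟨b, t', rfl⟩
    have hb : b ∈ a :: t := hp.symm.subset (List.mem_cons_self)
    have hab : a ≤ b := by
      rcases List.mem_cons.mp hb with rfl | hbt
      · exact le_rfl
      · exact (List.pairwise_cons.mp hs).1 b hbt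
    rcases lt_or_eq_of_le hab with hlt | rfl
    · exact Or.inr (List.Lex.rel hlt)
    · rcases sorted_lex_min t t' hs.of_cons hp.cons_inv with rfl | h
      · exact Or.inl rfl
      · exact Or.inr (List.Lex.cons h)

/-- Lemma 1 + Lemma 2(1) instantiated for the explicit representation of
multisets: the delayed lex-leader constraint on the sorted-list representation
is implied by the abstract lex-leader constraint. -/
theorem delayed_lex_leader_multiset {α : Type*} [LinearOrder α]
    (s : Multiset α) (g : Equiv.Perm α)
    (h : s.sort (· ≤ ·) = (s.map g).sort (· ≤ ·) ∨
      List.Lex (· < ·) (s.sort (· ≤ ·)) ((s.map g).sort (· ≤ ·))) :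
    s.sort (· ≤ ·) = (s.sort (· ≤ ·)).map g ∨
      List.Lex (· < ·) (s.sort (· ≤ ·)) ((s.sort (· ≤ ·)).map g) := by
  have hperm : ((s.map g).sort (· ≤ ·)).Perm ((s.sort (· ≤ ·)).map g) := by
    rw [← Multiset.coe_eq_coe, Multiset.sort_eq, ← Multiset.map_coe, Multiset.sort_eq]
  have h2 := sorted_lex_min _ _ (Multiset.pairwise_sort ..) hperm
  rcases h with h | h <;> rcases h2 with h2 | h2
  · exact Or.inl (h.trans h2)
  · exact Or.inr (h ▸ h2)
  · exact Or.inr (h2 ▸ h)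
  · exact Or.inr (lt_trans (α := List α) h h2)
end
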